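/- Let D = D_α be the diagonal operator on E_ω associated with a bounded sequence α : ℕ → K, and assume that every diagonal entry is attained infinitely often: for every i ∈ ℕ, the set { j ∈ ℕ : α_j = α_i } is infinite. Then the essential spectrum of D equals its full spectrum: σ_e(D) = σ(D). -/
import Mathlib


open Filter Topology

/-- The non-Archimedean Hilbert space `E_ω`: the space of sequences `u : ℕ → K`
such that `‖u i‖ * ‖ω i‖^(1/2) → 0`, as a submodule of `ℕ → K`. -/
def Eomega (K : Type*) [NontriviallyNormedField K] (ω : ℕ → K) : Submodule K (ℕ → K) where
  carrier := {u | Tendsto (fun i => ‖u i‖ * Real.sqrt ‖ω i‖) atTop (𝓝 0)}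
  zero_mem' := by simpa using (tendsto_const_nhds : Tendsto (fun _ : ℕ => (0:ℝ)) atTop (𝓝 0))
  add_mem' := by
    intro u v hu hv
    have h := hu.add hv
    rw [add_zero] at h
    refine squeeze_zero (fun i => by positivity) (fun i => ?_) h
    calc ‖(u + v) i‖ * Real.sqrt ‖ω i‖
        ≤ (‖u i‖ + ‖v i‖) * Real.sqrt ‖ω i‖ := by
          have : ‖(u + v) i‖ ≤ ‖u i‖ + ‖v i‖ := by
            simpa [Pi.add_apply] using norm_add_le (u i) (v i)
          exact mul_le_mul_of_nonneg_right this (Real.sqrt_nonneg _)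
      _ = ‖u i‖ * Real.sqrt ‖ω i‖ + ‖v i‖ * Real.sqrt ‖ω i‖ := by ring
  smul_mem' := by
    intro c u hu
    have h := hu.const_mul ‖c‖
    rw [mul_zero] at h
    refine squeeze_zero (fun i => by positivity) (fun i => le_of_eq ?_) h
    simp [Pi.smul_apply, norm_smul, mul_assoc]

lemma Eomega.bddAbove {K : Type*} [NontriviallyNormedField K] {ω : ℕ → K}
    (u : Eomega K ω) :
    BddAbove (Set.range fun i => ‖(u : ℕ → K) i‖ * Real.sqrt ‖ω i‖) :=
  u.2.bddAbove_range

/-- The sup-norm on `E_ω`: `‖u‖ = sup_i ‖u i‖ * ‖ω i‖^(1/2)`. -/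
noncomputable instance Eomega.instSeminormedAddCommGroup
    {K : Type*} [NontriviallyNormedField K] {ω : ℕ → K} :
    SeminormedAddCommGroup (Eomega K ω) :=
  AddGroupSeminorm.toSeminormedAddCommGroup
    { toFun := fun u => ⨆ i, ‖(u : ℕ → K) i‖ * Real.sqrt ‖ω i‖
      map_zero' := by simp
      add_le' := by
        intro u v
        refine ciSup_le fun i => ?_
        calc ‖((u + v : Eomega K ω) : ℕ → K) i‖ * Real.sqrt ‖ω i‖
            ≤ ‖(u : ℕ → K) i‖ * Real.sqrt ‖ω i‖ + ‖(v : ℕ → K) i‖ * Real.sqrt ‖ω i‖ := by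
              have : ‖((u + v : Eomega K ω) : ℕ → K) i‖ ≤ ‖(u : ℕ → K) i‖ + ‖(v : ℕ → K) i‖ := by
                simpa using norm_add_le ((u : ℕ → K) i) ((v : ℕ → K) i)
              nlinarith [Real.sqrt_nonneg ‖ω i‖, norm_nonneg ((u : ℕ → K) i),
                norm_nonneg ((v : ℕ → K) i)]
          _ ≤ _ := add_le_add (le_ciSup (Eomega.bddAbove u) i) (le_ciSup (Eomega.bddAbove v) i)
      neg' := by intro u; simp }


/-- Shortcut instance making sure that the topology of `E_ω` used below is the
norm topology (and not the topology induced by the product topology on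
`ℕ → K`). -/
noncomputable instance (priority := 5000) Eomega.instTopologicalSpace
    {K : Type*} [NontriviallyNormedField K] {ω : ℕ → K} :
    TopologicalSpace (Eomega K ω) :=
  Eomega.instSeminormedAddCommGroup.toUniformSpace.toTopologicalSpace

/-- The diagonal operator `D = D_α` on `E_ω` associated with a bounded
sequence `α : ℕ → K`, given by `(D u) i = α i * u i`. -/
def diagOp {K : Type*} [NontriviallyNormedField K] (ω : ℕ → K) (α : ℕ → K)
    (hα : ∃ C, ∀ i, ‖α i‖ ≤ C) : Eomega K ω →ₗ[K] Eomega K ω where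
  toFun u := ⟨fun i => α i * (u : ℕ → K) i, by
    obtain ⟨C, hC⟩ := hα
    have h := u.2.const_mul C
    rw [mul_zero] at h
    refine squeeze_zero (fun i => by positivity) (fun i => ?_) h
    calc ‖α i * (u : ℕ → K) i‖ * Real.sqrt ‖ω i‖
        = ‖α i‖ * (‖(u : ℕ → K) i‖ * Real.sqrt ‖ω i‖) := by rw [norm_mul]; ring
      _ ≤ C * (‖(u : ℕ → K) i‖ * Real.sqrt ‖ω i‖) :=
          mul_le_mul_of_nonneg_right (hC i) (by positivity)⟩
  map_add' u v := by
    apply Subtype.ext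
    funext i
    simp [mul_add]
  map_smul' c u := by
    apply Subtype.ext
    funext i
    simp [Pi.smul_apply, smul_eq_mul]
    ring

/-- `T` is a Fredholm operator of index 0: its kernel is finite-dimensional,
its range is closed, and the quotient by the range is finite-dimensional of the
same dimension as the kernel. -/
def IsFredholm0 {K : Type*} [NontriviallyNormedField K] {ω : ℕ → K}
    (T : Eomega K ω →ₗ[K] Eomega K ω) : Prop :=
  FiniteDimensional K (LinearMap.ker T) ∧
  IsClosed (LinearMap.range T : Set (Eomega K ω)) ∧
  FiniteDimensional K (Eomega K ω ⧸ LinearMap.range T) ∧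
  Module.finrank K (LinearMap.ker T) =
    Module.finrank K (Eomega K ω ⧸ LinearMap.range T)

/-- The spectrum of `D`: those `μ` such that `μ·I − D` has no bounded (i.e.
continuous) two-sided inverse. -/
def specSet {K : Type*} [NontriviallyNormedField K] {ω : ℕ → K}
    (D : Eomega K ω →ₗ[K] Eomega K ω) : Set K :=
  {μ | ¬ ∃ S : Eomega K ω →ₗ[K] Eomega K ω, Continuous S ∧
        S ∘ₗ (μ • LinearMap.id - D) = LinearMap.id ∧
        (μ • LinearMap.id - D) ∘ₗ S = LinearMap.id}

/-- The essential spectrum of `D`: those `μ` such that `μ·I − D` is not a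
Fredholm operator of index 0. -/
def essSpec {K : Type*} [NontriviallyNormedField K] {ω : ℕ → K}
    (D : Eomega K ω →ₗ[K] Eomega K ω) : Set K :=
  {μ | ¬ IsFredholm0 (μ • LinearMap.id - D)}

section Aux

variable {K : Type*} [NontriviallyNormedField K] {ω : ℕ → K}

lemma Eomega.norm_def (u : Eomega K ω) :
    ‖u‖ = ⨆ i, ‖(u : ℕ → K) i‖ * Real.sqrt ‖ω i‖ := rfl

lemma Eomega.coord_le (u : Eomega K ω) (i : ℕ) :
    ‖(u : ℕ → K) i‖ * Real.sqrt ‖ω i‖ ≤ ‖u‖ :=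
  le_ciSup (Eomega.bddAbove u) i

lemma Eomega.mem_iff (u : ℕ → K) :
    u ∈ Eomega K ω ↔ Tendsto (fun i => ‖u i‖ * Real.sqrt ‖ω i‖) atTop (𝓝 0) :=
  Iff.rfl

lemma diagOp_apply (α : ℕ → K) (hα : ∃ C, ∀ i, ‖α i‖ ≤ C) (u : Eomega K ω) (i : ℕ) :
    ((diagOp ω α hα u : Eomega K ω) : ℕ → K) i = α i * (u : ℕ → K) i := rfl

lemma sub_diag_apply (α : ℕ → K) (hα : ∃ C, ∀ i, ‖α i‖ ≤ C) (μ : K)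
    (u : Eomega K ω) (i : ℕ) :
    (((μ • LinearMap.id - diagOp ω α hα : Eomega K ω →ₗ[K] Eomega K ω) u
        : Eomega K ω) : ℕ → K) i
      = (μ - α i) * (u : ℕ → K) i := by
  simp only [LinearMap.sub_apply, LinearMap.smul_apply, LinearMap.id_apply]
  rw [AddSubgroupClass.coe_sub]
  simp [diagOp_apply, Pi.sub_apply, sub_mul]

/-- Existence of field elements with norm in a prescribed window. -/
lemma exists_norm_between {r : K} (hr : 1 < ‖r‖) {t : ℝ} (ht : 0 < t) :
    ∃ x : K, t ≤ ‖x‖ ∧ ‖x‖ ≤ t * ‖r‖ := by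
  obtain ⟨n, h1, h2⟩ := exists_mem_Ico_zpow ht hr
  have hrpos : (0:ℝ) < ‖r‖ := lt_trans one_pos hr
  refine ⟨r ^ (n + 1), ?_, ?_⟩
  · rw [norm_zpow]; exact h2.le
  · rw [norm_zpow, zpow_add_one₀ hrpos.ne']
    exact mul_le_mul_of_nonneg_right h1 hrpos.le

/-- A diagonal operator is bounded by the sup of its entries. -/
lemma diagOp_norm_le (α : ℕ → K) (hα : ∃ C, ∀ i, ‖α i‖ ≤ C) (C : ℝ) (hC : 0 ≤ C)
    (h : ∀ i, ‖α i‖ ≤ C) (u : Eomega K ω) :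
    ‖diagOp ω α hα u‖ ≤ C * ‖u‖ := by
  rw [Eomega.norm_def]
  refine ciSup_le fun i => ?_
  calc ‖((diagOp ω α hα u : Eomega K ω) : ℕ → K) i‖ * Real.sqrt ‖ω i‖
      = ‖α i‖ * (‖(u : ℕ → K) i‖ * Real.sqrt ‖ω i‖) := by
        rw [diagOp_apply, norm_mul]; ring
    _ ≤ C * (‖(u : ℕ → K) i‖ * Real.sqrt ‖ω i‖) :=
        mul_le_mul_of_nonneg_right (h i) (by positivity)
    _ ≤ C * ‖u‖ := mul_le_mul_of_nonneg_left (Eomega.coord_le u i) hC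

lemma diagOp_continuous (α : ℕ → K) (hα : ∃ C, ∀ i, ‖α i‖ ≤ C) :
    Continuous (diagOp ω α hα) := by
  obtain ⟨C, hC⟩ := hα
  have hC0 : 0 ≤ C := le_trans (norm_nonneg _) (hC 0)
  exact AddMonoidHomClass.continuous_of_bound (diagOp ω α ⟨C, hC⟩) C
    (diagOp_norm_le α ⟨C, hC⟩ C hC0 hC)

/-- If the diagonal entries of `μ - α` are bounded below, the operator
`μ I - D` has a continuous two-sided inverse. -/
lemma diag_inverse (hω : ∀ i, ω i ≠ 0) (α : ℕ → K) (hα : ∃ C, ∀ i, ‖α i‖ ≤ C) (μ : K)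
    (c : ℝ) (hc : 0 < c) (hb : ∀ i, c ≤ ‖μ - α i‖) :
    ∃ S : Eomega K ω →ₗ[K] Eomega K ω, Continuous S ∧
      S ∘ₗ (μ • LinearMap.id - diagOp ω α hα) = LinearMap.id ∧
      (μ • LinearMap.id - diagOp ω α hα) ∘ₗ S = LinearMap.id := by
  have hne : ∀ i, μ - α i ≠ 0 := by
    intro i h
    have := hb i
    rw [h, norm_zero] at this
    linarith
  have hβb : ∀ i, ‖(fun i => (μ - α i)⁻¹) i‖ ≤ c⁻¹ := by
    intro i
    simp only [norm_inv]
    exact inv_anti₀ hc (hb i)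
  refine ⟨diagOp ω (fun i => (μ - α i)⁻¹) ⟨c⁻¹, hβb⟩, diagOp_continuous _ _, ?_, ?_⟩
  · ext u i
    simp only [LinearMap.comp_apply, LinearMap.id_apply]
    rw [diagOp_apply, sub_diag_apply, ← mul_assoc, inv_mul_cancel₀ (hne i), one_mul]
  · ext u i
    simp only [LinearMap.comp_apply, LinearMap.id_apply]
    rw [sub_diag_apply, diagOp_apply, ← mul_assoc, mul_inv_cancel₀ (hne i), one_mul]

/-- Standard basis vectors lie in `E_ω`. -/
lemma single_mem (j : ℕ) : (Pi.single j (1:K) : ℕ → K) ∈ Eomega K ω := by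
  rw [Eomega.mem_iff]
  refine Tendsto.congr' ?_ tendsto_const_nhds
  filter_upwards [eventually_gt_atTop j] with i hi
  rw [Pi.single_eq_of_ne (by omega : i ≠ j)]
  simp

/-- If `μ` is a diagonal value attained infinitely often, the kernel of
`μ I - D` is infinite-dimensional. -/
lemma ker_not_finiteDimensional (α : ℕ → K) (hα : ∃ C, ∀ i, ‖α i‖ ≤ C) (i0 : ℕ)
    (hinf : {j : ℕ | α j = α i0}.Infinite) :
    ¬ FiniteDimensional K
      (LinearMap.ker ((α i0) • LinearMap.id - diagOp ω α hα)) := by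
  intro hFD
  set T := (α i0) • LinearMap.id - diagOp ω α hα with hT
  have hker : ∀ j : ℕ, α j = α i0 →
      (⟨Pi.single j 1, single_mem j⟩ : Eomega K ω) ∈ LinearMap.ker T := by
    intro j hj
    rw [LinearMap.mem_ker]
    refine Subtype.ext (funext fun k => ?_)
    rw [hT, sub_diag_apply]
    show (α i0 - α k) * (Pi.single j (1:K) : ℕ → K) k = (0 : Eomega K ω).1 k
    by_cases hk : k = j
    · subst hk
      rw [Pi.single_eq_same, hj]
      simp
    · rw [Pi.single_eq_of_ne hk]
      simp
  set Sset := {j : ℕ | α j = α i0} with hS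
  haveI : Infinite Sset := hinf.to_subtype
  set f : Sset → LinearMap.ker T := fun j =>
    ⟨⟨Pi.single (j:ℕ) 1, single_mem _⟩, hker _ j.2⟩ with hf
  have hli0 : LinearIndependent K (fun j : Sset => (Pi.single (j:ℕ) 1 : ℕ → K)) := by
    rw [linearIndependent_iff']
    intro s g hsum j hj
    have := congrFun hsum (j : ℕ)
    rw [Finset.sum_apply] at this
    rw [Finset.sum_eq_single j (fun b _ hb => ?_) (fun h => absurd hj h)] at this
    · simpa using this
    · have : (b : ℕ) ≠ (j : ℕ) := fun h => hb (Subtype.ext h)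
      simp [Pi.single_eq_of_ne this.symm]
  have hli : LinearIndependent K f := by
    have hcomp : (fun j : Sset => (Pi.single (j:ℕ) 1 : ℕ → K))
        = ((Eomega K ω).subtype ∘ₗ (LinearMap.ker T).subtype) ∘ f := rfl
    exact LinearIndependent.of_comp _ (hcomp ▸ hli0)
  haveI : IsNoetherian K (LinearMap.ker T) := IsNoetherian.iff_fg.mpr hFD
  haveI := hli.finite_of_isNoetherian
  exact not_finite Sset

end Aux

/-- If `μ I - D` is surjective and all diagonal entries `μ - α i` are nonzero,
then they are bounded below. -/
lemma bounded_below {K : Type*} [NontriviallyNormedField K] {ω : ℕ → K}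
    (hω : ∀ i, ω i ≠ 0) (α : ℕ → K) (hα : ∃ C, ∀ i, ‖α i‖ ≤ C) (μ : K)
    (hne : ∀ i, μ - α i ≠ 0)
    (hsurj : Function.Surjective
      (μ • LinearMap.id - diagOp ω α hα : Eomega K ω →ₗ[K] Eomega K ω)) :
    ∃ c > 0, ∀ i, c ≤ ‖μ - α i‖ := by
  by_contra hcon
  push_neg at hcon
  -- extract a rapid subsequence
  have claim : ∀ m n : ℕ, ∃ j, m < j ∧ ‖μ - α j‖ < (1/2 : ℝ)^n := by
    intro m n
    have hmin : 0 < min ((1/2:ℝ)^n)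
        ((Finset.range (m+1)).inf' (by simp) fun j => ‖μ - α j‖) := by
      refine lt_min (by positivity) ?_
      rw [Finset.lt_inf'_iff]
      exact fun j _ => norm_pos_iff.mpr (hne j)
    obtain ⟨j, hj⟩ := hcon _ hmin
    refine ⟨j, ?_, lt_of_lt_of_le hj (min_le_left _ _)⟩
    by_contra h
    push_neg at h
    have : min ((1/2:ℝ)^n) ((Finset.range (m+1)).inf' (by simp) fun j => ‖μ - α j‖)
        ≤ ‖μ - α j‖ :=
      le_trans (min_le_right _ _) (Finset.inf'_le _ (by simp [Nat.lt_succ_iff, h]))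
    linarith
  choose F hF1 hF2 using claim
  set i : ℕ → ℕ := fun n => Nat.rec (F 0 0) (fun n p => F p (n+1)) n with hi
  have hlt : ∀ n, i n < i (n+1) := fun n => hF1 (i n) (n+1)
  have hmono : StrictMono i := strictMono_nat_of_lt_succ hlt
  have hsmall : ∀ n, ‖μ - α (i n)‖ < (1/2:ℝ)^n := by
    intro n
    cases n with
    | zero => exact hF2 0 0
    | succ n => exact hF2 (i n) (n+1)
  -- elements of controlled norm
  obtain ⟨ξ, hξ⟩ := NormedField.exists_one_lt_norm K
  have hξ0 : (0:ℝ) < ‖ξ‖ := lt_trans one_pos hξ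
  have hw : ∀ j : ℕ, ∃ x : K,
      1 ≤ ‖x‖ * Real.sqrt ‖ω j‖ ∧ ‖x‖ * Real.sqrt ‖ω j‖ ≤ ‖ξ‖ := by
    intro j
    have hs : 0 < Real.sqrt ‖ω j‖ := Real.sqrt_pos.mpr (norm_pos_iff.mpr (hω j))
    obtain ⟨x, h1, h2⟩ := exists_norm_between hξ (t := (Real.sqrt ‖ω j‖)⁻¹)
      (by positivity)
    refine ⟨x, ?_, ?_⟩
    · have := mul_le_mul_of_nonneg_right h1 hs.le
      rwa [inv_mul_cancel₀ hs.ne'] at this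
    · have := mul_le_mul_of_nonneg_right h2 hs.le
      calc ‖x‖ * Real.sqrt ‖ω j‖ ≤ (Real.sqrt ‖ω j‖)⁻¹ * ‖ξ‖ * Real.sqrt ‖ω j‖ :=
            this
        _ = ‖ξ‖ := by field_simp
  choose w hw1 hw2 using hw
  -- the target vector
  set v : ℕ → K := (Set.range i).indicator (fun j => (μ - α j) * w j) with hv
  have hvmem : v ∈ Eomega K ω := by
    rw [Eomega.mem_iff]
    rw [Metric.tendsto_atTop]
    intro ε hε
    obtain ⟨N, hN⟩ := exists_pow_lt_of_lt_one (div_pos hε hξ0)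
      (by norm_num : (1/2:ℝ) < 1)
    refine ⟨i N, fun j hj => ?_⟩
    rw [Real.dist_eq, sub_zero, abs_of_nonneg (by positivity)]
    by_cases hjr : j ∈ Set.range i
    · obtain ⟨n, rfl⟩ := hjr
      have hnN : N ≤ n := (hmono.le_iff_le).mp hj
      rw [hv, Set.indicator_of_mem (Set.mem_range_self n)]
      calc ‖(μ - α (i n)) * w (i n)‖ * Real.sqrt ‖ω (i n)‖
          = ‖μ - α (i n)‖ * (‖w (i n)‖ * Real.sqrt ‖ω (i n)‖) := by
            rw [norm_mul]; ring
        _ ≤ (1/2:ℝ)^n * ‖ξ‖ :=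
            mul_le_mul (hsmall n).le (hw2 _) (by positivity) (by positivity)
        _ ≤ (1/2:ℝ)^N * ‖ξ‖ :=
            mul_le_mul_of_nonneg_right
              (pow_le_pow_of_le_one (by norm_num) (by norm_num) hnN) hξ0.le
        _ < ε := by
            have := (lt_div_iff₀ hξ0).mp hN
            linarith
    · rw [hv, Set.indicator_of_notMem hjr]
      simpa using hε
  obtain ⟨u, hu⟩ := hsurj ⟨v, hvmem⟩
  have hueq : ∀ n, (u : ℕ → K) (i n) = w (i n) := by
    intro n
    have h1 : (μ - α (i n)) * (u : ℕ → K) (i n) = v (i n) := by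
      have := congrFun (congrArg (Subtype.val) hu) (i n)
      rwa [sub_diag_apply] at this
    rw [hv, Set.indicator_of_mem (Set.mem_range_self n)] at h1
    exact mul_left_cancel₀ (hne _) h1
  have hut : Tendsto (fun n => ‖(u : ℕ → K) (i n)‖ * Real.sqrt ‖ω (i n)‖)
      atTop (𝓝 0) := by
    have h2 : Tendsto (fun j => ‖(u : ℕ → K) j‖ * Real.sqrt ‖ω j‖) atTop (𝓝 0) :=
      u.2
    exact h2.comp hmono.tendsto_atTop
  obtain ⟨n, hn⟩ := (hut.eventually (gt_mem_nhds one_pos)).exists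
  rw [hueq n] at hn
  exact absurd (hw1 (i n)) (by linarith)

/-- If every diagonal entry of `D` is attained infinitely often,
then the essential spectrum of `D` equals its full spectrum. -/
theorem stmt18 {K : Type*} [NontriviallyNormedField K] [CompleteSpace K]
    (hna : ∀ x y : K, ‖x + y‖ ≤ max ‖x‖ ‖y‖)
    (ω : ℕ → K) (hω : ∀ i, ω i ≠ 0)
    (α : ℕ → K) (hα : ∃ C, ∀ i, ‖α i‖ ≤ C)
    (hinf : ∀ i : ℕ, {j : ℕ | α j = α i}.Infinite) :
    essSpec (diagOp ω α hα) = specSet (diagOp ω α hα) := by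
  ext μ
  simp only [essSpec, specSet, Set.mem_setOf_eq]
  rw [not_iff_not]
  constructor
  · rintro hF
    by_cases hμ : ∃ i, μ = α i
    · exfalso
      obtain ⟨i0, rfl⟩ := hμ
      exact ker_not_finiteDimensional α hα i0 (hinf i0) hF.1
    · push_neg at hμ
      have hne : ∀ i, μ - α i ≠ 0 := fun i => sub_ne_zero.mpr (hμ i)
      set T := μ • LinearMap.id - diagOp ω α hα with hT
      obtain ⟨hFD, hcl, hq, hdim⟩ := hF
      have hk0 : Module.finrank K (LinearMap.ker T) = 0 := by
        have hker : LinearMap.ker T = ⊥ := by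
          rw [LinearMap.ker_eq_bot']
          intro u hu0
          refine Subtype.ext (funext fun k => ?_)
          have h3 := congrFun (congrArg Subtype.val hu0) k
          rw [hT] at h3
          rw [sub_diag_apply] at h3
          have h4 := (mul_eq_zero.mp h3).resolve_left (hne k)
          simpa using h4
        rw [hker]; exact finrank_bot K _
      haveI := hq
      have hq0 : Module.finrank K (Eomega K ω ⧸ LinearMap.range T) = 0 := by
        rw [← hdim]; exact hk0
      haveI : Subsingleton (Eomega K ω ⧸ LinearMap.range T) :=
        Module.finrank_zero_iff.mp hq0
      have hsurj : Function.Surjective T := by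
        intro y
        have h5 : Submodule.Quotient.mk y = (0 : Eomega K ω ⧸ LinearMap.range T) :=
          Subsingleton.elim _ _
        exact (Submodule.Quotient.mk_eq_zero _).mp h5
      obtain ⟨c, hc, hb⟩ := bounded_below hω α hα μ hne hsurj
      exact diag_inverse hω α hα μ c hc hb
  · rintro ⟨S, hScont, h1, h2⟩
    set T := μ • LinearMap.id - diagOp ω α hα with hT
    have hli : ∀ x, S (T x) = x := fun x => by
      have := LinearMap.ext_iff.mp h1 x
      simpa using this
    have hri : ∀ x, T (S x) = x := fun x => by
      have := LinearMap.ext_iff.mp h2 x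
      simpa using this
    have hinj : Function.Injective T := Function.LeftInverse.injective hli
    have hsurj : Function.Surjective T := fun y => ⟨S y, hri y⟩
    have hker : LinearMap.ker T = ⊥ := LinearMap.ker_eq_bot.mpr hinj
    have hrange : LinearMap.range T = ⊤ := LinearMap.range_eq_top.mpr hsurj
    haveI : Subsingleton (Eomega K ω ⧸ LinearMap.range T) :=
      Submodule.Quotient.subsingleton_iff.mpr hrange
    haveI : FiniteDimensional K (Eomega K ω ⧸ LinearMap.range T) :=
      Module.Finite.of_surjective (0 : K →ₗ[K] _)
        (fun q => ⟨0, Subsingleton.elim _ _⟩)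
    refine ⟨?_, ?_, inferInstance, ?_⟩
    · rw [hker]; infer_instance
    · rw [hrange]
      simp only [Submodule.top_coe]
      exact isClosed_univ
    · rw [hker, finrank_bot]
      exact (Module.finrank_zero_of_subsingleton).symm
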